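/- Let α > 0 be irrational, let p_k/q_k be the convergents of the continued fraction expansion of α (with p₀ = 1, q₀ = 0, p₁ = ⌊α⌋, q₁ = 1) and let r_k be the partial quotients (α = r₁ + 1/(r₂ + ...)). Then the series Σ_{k≥0} (p_k − α q_k)² r_{k+1} converges and equals α. -/

import Mathlib

/-- Iterates of the Gauss map starting from `α`: `x₀ = α`, `x_{n+1} = 1/(x_n - ⌊x_n⌋)`.
The partial quotient `r_{k+1}` of the continued fraction `α = r₁ + 1/(r₂ + ⋯)` is
`⌊x_k⌋` (so `r₁ = ⌊α⌋ = ⌊x₀⌋`, `r₂ = ⌊x₁⌋`, …). -/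
noncomputable def gaussIter (α : ℝ) : ℕ → ℝ
  | 0 => α
  | n + 1 => 1 / (gaussIter α n - ⌊gaussIter α n⌋)

/-- The partial quotient `r_{k+1}`. -/
noncomputable def r (α : ℝ) (k : ℕ) : ℤ := ⌊gaussIter α k⌋

/-- Numerators of the convergents: `p₀ = 1`, `p₁ = ⌊α⌋ = r₁`,
`p_{k+2} = r_{k+2} p_{k+1} + p_k`. -/
noncomputable def p (α : ℝ) : ℕ → ℤ
  | 0 => 1
  | 1 => ⌊α⌋
  | k + 2 => r α (k + 1) * p α (k + 1) + p α k

/-- Denominators of the convergents: `q₀ = 0`, `q₁ = 1`,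
`q_{k+2} = r_{k+2} q_{k+1} + q_k`. -/
noncomputable def q (α : ℝ) : ℕ → ℤ
  | 0 => 0
  | 1 => 1
  | k + 2 => r α (k + 1) * q α (k + 1) + q α k

section aux

variable (α : ℝ)

/-- error term -/
noncomputable def E (k : ℕ) : ℝ := (p α k : ℝ) - α * q α k

variable {α}

lemma gauss_irr (hirr : Irrational α) : ∀ k, Irrational (gaussIter α k)
  | 0 => hirr
  | k + 1 => by
    have h := gauss_irr hirr k
    have h2 : Irrational (gaussIter α k - ⌊gaussIter α k⌋) := h.sub_intCast _
    simpa [gaussIter, one_div] using h2.inv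

lemma fract_pos (hirr : Irrational α) (k : ℕ) :
    0 < gaussIter α k - ⌊gaussIter α k⌋ := by
  have h := gauss_irr hirr k
  have h1 : (⌊gaussIter α k⌋ : ℝ) ≤ gaussIter α k := Int.floor_le _
  have h2 : (⌊gaussIter α k⌋ : ℝ) ≠ gaussIter α k := by
    intro he; exact (h.sub_intCast ⌊gaussIter α k⌋) (by rw [← he]; simp)
  cases h1.lt_or_eq with
  | inl h => linarith
  | inr h => exact absurd h h2

lemma fract_lt_one (k : ℕ) : gaussIter α k - ⌊gaussIter α k⌋ < 1 := by
  have := Int.lt_floor_add_one (gaussIter α k); linarith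

lemma gauss_G (hirr : Irrational α) (k : ℕ) :
    gaussIter α (k + 1) * (gaussIter α k - ⌊gaussIter α k⌋) = 1 := by
  have h1 := fract_pos hirr k
  rw [show gaussIter α (k+1) = 1 / (gaussIter α k - ⌊gaussIter α k⌋) from rfl]
  exact one_div_mul_cancel (ne_of_gt h1)

lemma gauss_gt_one (hirr : Irrational α) (k : ℕ) : 1 < gaussIter α (k + 1) := by
  have h1 := fract_pos hirr k
  have h2 := fract_lt_one (α := α) k
  have hG := gauss_G hirr k
  nlinarith

lemma gauss_pos (hα : 0 < α) (hirr : Irrational α) (k : ℕ) : 0 < gaussIter α k := by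
  cases k with
  | zero => exact hα
  | succ n => linarith [gauss_gt_one hirr n]

/-- key recurrence: E_{k+1} = -E_k * fract(x_k) -/
lemma E_rec' (hirr : Irrational α) :
    ∀ k, E α (k + 1) = - E α k * (gaussIter α k - ⌊gaussIter α k⌋)
  | 0 => by
    simp only [E, p, q, gaussIter]
    push_cast
    ring
  | k + 1 => by
    have ih := E_rec' hirr k
    have G := gauss_G hirr k
    have hE2 : E α (k + 2) = (r α (k+1) : ℝ) * E α (k + 1) + E α k := by
      simp only [E, p, q]; push_cast; ring
    rw [hE2]; simp only [r]
    linear_combination gaussIter α (k + 1) * ih - E α k * G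

lemma E_rec (hirr : Irrational α) (k : ℕ) :
    gaussIter α (k + 1) * E α (k + 1) = - E α k := by
  linear_combination gaussIter α (k + 1) * (E_rec' hirr k) - E α k * (gauss_G hirr k)

lemma partial_sum (hirr : Irrational α) (n : ℕ) :
    ∑ k ∈ Finset.range (n + 1), E α k ^ 2 * (r α k : ℝ)
      = α + E α n * E α (n + 1) := by
  induction n with
  | zero =>
    rw [Finset.sum_range_one]
    have h0 : E α 0 = 1 := by simp [E, p, q]
    have h1 : E α 1 = (⌊α⌋:ℝ) - α := by simp [E, p, q]
    have hr0 : (r α 0 : ℝ) = (⌊α⌋:ℝ) := by simp [r, gaussIter]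
    rw [h0, h1, hr0]; ring
  | succ n ih =>
    rw [Finset.sum_range_succ, ih]
    have hrec := E_rec hirr n
    have hrec2 := E_rec' hirr (n + 1)
    simp only [r]
    linear_combination E α (n + 1) * hrec - E α (n + 1) * hrec2

lemma E_abs (hirr : Irrational α) (k : ℕ) :
    |E α (k + 1)| = |E α k| / gaussIter α (k + 1) := by
  have hx : (0:ℝ) < gaussIter α (k + 1) := by linarith [gauss_gt_one hirr k]
  rw [eq_div_iff (ne_of_gt hx), ← abs_of_pos hx, ← abs_mul, mul_comm, E_rec hirr k,
    abs_neg]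

lemma E_prod_decay (hirr : Irrational α) (n : ℕ) :
    |E α (n + 1) * E α (n + 2)| ≤ |E α n * E α (n + 1)| / 2 := by
  have hx1 := gauss_gt_one hirr n
  have hx2 := gauss_gt_one hirr (n + 1)
  have hx1' : (0:ℝ) < gaussIter α (n + 1) := by linarith
  have hx2' : (0:ℝ) < gaussIter α (n + 2) := by linarith
  have hfl : (1:ℝ) ≤ (⌊gaussIter α (n + 1)⌋ : ℝ) := by
    exact_mod_cast Int.le_floor.2 (by exact_mod_cast hx1.le)
  have G := gauss_G hirr (n + 1)
  have hprod : 2 ≤ gaussIter α (n + 1) * gaussIter α (n + 2) := by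
    nlinarith [mul_le_mul_of_nonneg_left hfl hx2'.le]
  have key : |E α (n+1)| * |E α (n+2)|
      = (|E α n| * |E α (n+1)|) / (gaussIter α (n+1) * gaussIter α (n+2)) := by
    rw [E_abs hirr (n+1), E_abs hirr n]
    field_simp
  rw [abs_mul, abs_mul, key]
  exact div_le_div_of_nonneg_left (by positivity) (by norm_num) hprod

lemma E_prod_geom (hirr : Irrational α) (n : ℕ) :
    |E α n * E α (n + 1)| ≤ |E α 0 * E α 1| * (1/2) ^ n := by
  induction n with
  | zero => simp
  | succ n ih =>
    calc |E α (n+1) * E α (n+2)| ≤ |E α n * E α (n+1)| / 2 := E_prod_decay hirr n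
    _ ≤ (|E α 0 * E α 1| * (1/2) ^ n) / 2 := by linarith
    _ = |E α 0 * E α 1| * (1/2) ^ (n+1) := by ring

lemma term_nonneg (hα : 0 < α) (hirr : Irrational α) (k : ℕ) :
    0 ≤ E α k ^ 2 * (r α k : ℝ) := by
  apply mul_nonneg (sq_nonneg _)
  have : (0:ℤ) ≤ ⌊gaussIter α k⌋ := Int.floor_nonneg.2 (gauss_pos hα hirr k).le
  exact_mod_cast this

end aux


theorem sum_cf_sq (α : ℝ) (hα : 0 < α) (hirr : Irrational α) :
    HasSum (fun k : ℕ => ((p α k : ℝ) - α * q α k) ^ 2 * (r α k : ℝ)) α := by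
  have hterm : (fun k : ℕ => ((p α k : ℝ) - α * q α k) ^ 2 * (r α k : ℝ))
      = fun k => E α k ^ 2 * (r α k : ℝ) := rfl
  rw [hterm, hasSum_iff_tendsto_nat_of_nonneg (fun k => term_nonneg hα hirr k)]
  have hlim : Filter.Tendsto (fun n => E α n * E α (n + 1)) Filter.atTop (nhds 0) := by
    have hgeo : Filter.Tendsto (fun n : ℕ => |E α 0 * E α 1| * (1/2)^n)
        Filter.atTop (nhds 0) := by
      rw [show (0:ℝ) = |E α 0 * E α 1| * 0 by ring]
      exact Filter.Tendsto.const_mul _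
        (tendsto_pow_atTop_nhds_zero_of_lt_one (by norm_num) (by norm_num))
    exact squeeze_zero_norm
      (fun n => by simpa [Real.norm_eq_abs, abs_mul] using E_prod_geom hirr n) hgeo
  have key : Filter.Tendsto (fun n => ∑ k ∈ Finset.range (n + 1), E α k ^ 2 * (r α k : ℝ))
      Filter.atTop (nhds α) := by
    simp_rw [partial_sum hirr]
    simpa using tendsto_const_nhds.add hlim
  exact (Filter.tendsto_add_atTop_iff_nat 1).mp key
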